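/- Let {T(t)}_{t≥0} be a C₀-semigroup on a separable Hilbert space H such that T(t) is an m-isometry for every t ≥ 0. Then for each x ∈ H, the function t ↦ ‖T(t)x‖² on [0,∞) is a polynomial of degree less than m. -/

import Mathlib

open Finset

def dOp (m : ℕ) (τ : ℝ) (u : ℝ → ℝ) (t : ℝ) : ℝ :=
  ∑ k ∈ range (m+1), (-1:ℝ)^k * (m.choose k) * u (t + k*τ)

lemma dOp_succ (m : ℕ) (τ : ℝ) (u : ℝ → ℝ) (t : ℝ) :
    dOp (m+1) τ u t = dOp m τ u t - dOp m τ u (t+τ) := by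
  have e1 : dOp (m+1) τ u t
      = (∑ j ∈ range (m+1), (-1:ℝ)^(j+1) * ((m.choose j : ℝ) + (m.choose (j+1) : ℝ)) * u (t + (j+1)*τ)) + u t := by
    unfold dOp
    rw [Finset.sum_range_succ']
    congr 1
    · apply Finset.sum_congr rfl; intro j _
      rw [Nat.choose_succ_succ']; push_cast; ring
    · simp
  have e2 : dOp m τ u (t+τ) = ∑ j ∈ range (m+1), (-1:ℝ)^j * (m.choose j) * u (t + (j+1)*τ) := by
    unfold dOp
    apply Finset.sum_congr rfl; intro j _
    congr 2; push_cast; ring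
  have e3 : dOp m τ u t = (∑ j ∈ range (m+1), (-1:ℝ)^(j+1) * (m.choose (j+1) : ℝ) * u (t + (j+1)*τ)) + u t := by
    unfold dOp
    rw [Finset.sum_range_succ']
    congr 1
    · rw [Finset.sum_range_succ]
      simp [Nat.choose_succ_self]
    · simp
  rw [e1, e2, e3]
  have : (∑ j ∈ range (m+1), (-1:ℝ)^(j+1) * ((m.choose j : ℝ) + (m.choose (j+1) : ℝ)) * u (t + (j+1)*τ))
      = ∑ j ∈ range (m+1), ((-1:ℝ)^(j+1) * (m.choose (j+1) : ℝ) * u (t + (j+1)*τ)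
          - (-1:ℝ)^j * (m.choose j : ℝ) * u (t + (j+1)*τ)) := by
    apply Finset.sum_congr rfl; intro j _; ring
  rw [this, Finset.sum_sub_distrib]
  ring

lemma dOp_sub (m : ℕ) (τ : ℝ) (u w : ℝ → ℝ) (t : ℝ) :
    dOp m τ (fun s => u s - w s) t = dOp m τ u t - dOp m τ w t := by
  unfold dOp; rw [← Finset.sum_sub_distrib]; apply Finset.sum_congr rfl; intro k _; ring

lemma dOp_poly : ∀ (m : ℕ) (p : Polynomial ℝ), p.degree < (m : WithBot ℕ) →
    ∀ (τ t : ℝ), dOp m τ (fun s => p.eval s) t = 0 := by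
  intro m
  induction m with
  | zero =>
    intro p hp τ t
    have hp0 : p = 0 := by
      by_contra h
      rw [Polynomial.degree_eq_natDegree h, Nat.cast_lt] at hp
      omega
    subst hp0
    simp [dOp]
  | succ m ih =>
    intro p hp τ t
    set q : Polynomial ℝ := p.comp (Polynomial.X + Polynomial.C τ) - p with hqdef
    have hqdeg : q.degree < (m : WithBot ℕ) := by
      by_cases hp0 : p = 0
      · subst hp0
        simp only [hqdef, Polynomial.zero_comp, sub_zero, Polynomial.degree_zero]
        exact WithBot.bot_lt_coe m
      · have hnd : (p.comp (Polynomial.X + Polynomial.C τ)).natDegree = p.natDegree := by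
          rw [Polynomial.natDegree_comp, Polynomial.natDegree_X_add_C, mul_one]
        have hlc : (p.comp (Polynomial.X + Polynomial.C τ)).leadingCoeff = p.leadingCoeff := by
          rw [Polynomial.leadingCoeff_comp (by rw [Polynomial.natDegree_X_add_C]; omega)]
          rw [Polynomial.leadingCoeff_X_add_C, one_pow, mul_one]
        have hc0 : p.comp (Polynomial.X + Polynomial.C τ) ≠ 0 := by
          intro h
          apply hp0
          rw [← Polynomial.leadingCoeff_eq_zero, ← hlc, h, Polynomial.leadingCoeff_zero]
        have hdeq : (p.comp (Polynomial.X + Polynomial.C τ)).degree = p.degree := by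
          rw [Polynomial.degree_eq_natDegree hc0, Polynomial.degree_eq_natDegree hp0, hnd]
        have hlt : q.degree < p.degree := by
          have := Polynomial.degree_sub_lt hdeq hc0 hlc
          rwa [hdeq] at this
        have hple : p.degree ≤ (m : WithBot ℕ) := by
          rw [Polynomial.degree_eq_natDegree hp0, Nat.cast_le]
          rw [Polynomial.degree_eq_natDegree hp0, Nat.cast_lt] at hp
          omega
        exact lt_of_lt_of_le hlt hple
    have hsum : dOp m τ (fun s => q.eval s) t
        = dOp m τ (fun s => p.eval s) (t+τ) - dOp m τ (fun s => p.eval s) t := by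
      unfold dOp
      rw [← Finset.sum_sub_distrib]
      apply Finset.sum_congr rfl; intro k _
      have : q.eval (t + k*τ) = p.eval ((t+τ) + k*τ) - p.eval (t + k*τ) := by
        simp only [hqdef, Polynomial.eval_sub, Polynomial.eval_comp, Polynomial.eval_add,
          Polynomial.eval_X, Polynomial.eval_C]
        ring_nf
      dsimp only
      rw [this]; ring
    rw [dOp_succ, ← neg_sub (dOp m τ (fun s => p.eval s) (t+τ)), ← hsum, ih q hqdeg τ t, neg_zero]

lemma grid_lemma (g : ℝ → ℝ) (m : ℕ) (d : ℝ)
    (hrec : ∀ n : ℕ, dOp m d g ((n : ℝ)*d) = 0)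
    (h0 : ∀ k : ℕ, k < m → g ((k : ℝ)*d) = 0) : ∀ n : ℕ, g ((n : ℝ)*d) = 0 := by
  intro n
  induction n using Nat.strong_induction_on with
  | _ n ih =>
    by_cases hn : n < m
    · exact h0 n hn
    · push_neg at hn
      have h := hrec (n - m)
      unfold dOp at h
      rw [Finset.sum_range_succ] at h
      have hz : ∑ k ∈ range m, (-1:ℝ)^k * (m.choose k) * g (((n-m:ℕ):ℝ)*d + (k:ℝ)*d) = 0 := by
        apply Finset.sum_eq_zero; intro k hk
        have hk' : k < m := Finset.mem_range.mp hk
        have harg : ((n-m:ℕ):ℝ)*d + (k:ℝ)*d = ((n-m+k:ℕ):ℝ)*d := by push_cast; ring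
        rw [harg, ih (n-m+k) (by omega)]; ring
      rw [hz, zero_add, Nat.choose_self] at h
      have harg : ((n-m:ℕ):ℝ)*d + (m:ℝ)*d = (n:ℝ)*d := by
        rw [Nat.cast_sub hn]; ring
      rw [harg] at h
      have h2 : ((-1:ℝ)^m) ≠ 0 := pow_ne_zero _ (by norm_num)
      simpa [h2] using h

theorem stmt_6 {H : Type*} [NormedAddCommGroup H] [InnerProductSpace ℂ H] [CompleteSpace H]
    [TopologicalSpace.SeparableSpace H]
    (T : ℝ → H →L[ℂ] H) (m : ℕ) (hm : 0 < m)
    (hT0 : T 0 = 1)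
    (hTsem : ∀ s t : ℝ, 0 ≤ s → 0 ≤ t → T (s + t) = T t ∘L T s)
    (hTcont : ∀ x : H, Filter.Tendsto (fun t => T t x) (nhdsWithin 0 (Set.Ioi 0)) (nhds x))
    (hiso : ∀ t : ℝ, 0 ≤ t → ∀ x : H, ∑ k ∈ range (m + 1),
      ((-1 : ℝ)) ^ (m - k) * (m.choose k) * ‖((T t) ^ k) x‖ ^ 2 = 0) :
    ∀ x : H, ∃ p : Polynomial ℝ, p.degree < m ∧
      ∀ t : ℝ, 0 ≤ t → ‖T t x‖ ^ 2 = p.eval t := by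
  intro x
  set f : ℝ → ℝ := fun t => ‖T t x‖^2 with hf
  -- powers of the semigroup
  have hpow : ∀ τ : ℝ, 0 ≤ τ → ∀ k : ℕ, ∀ t : ℝ, 0 ≤ t →
      ((T τ)^k) (T t x) = T (t + (k:ℝ)*τ) x := by
    intro τ hτ k
    induction k with
    | zero => intro t ht; simp
    | succ k ih =>
      intro t ht
      rw [pow_succ, ContinuousLinearMap.mul_apply]
      have h1 : (T τ) (T t x) = T (t + τ) x := by
        rw [hTsem t τ ht hτ]; rfl
      rw [h1, ih (t+τ) (by linarith)]
      congr 1; push_cast; ring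
  -- the finite-difference equation for f
  have hfeq : ∀ t : ℝ, 0 ≤ t → ∀ τ : ℝ, 0 ≤ τ → dOp m τ f t = 0 := by
    intro t ht τ hτ
    have h := hiso τ hτ (T t x)
    have hterm : ∀ k ∈ range (m+1), (-1:ℝ)^(m-k) * (m.choose k) * ‖((T τ)^k) (T t x)‖^2
        = (-1:ℝ)^m * ((-1:ℝ)^k * (m.choose k) * f (t + (k:ℝ)*τ)) := by
      intro k hk
      have hk' : k ≤ m := by
        have := Finset.mem_range.mp hk; omega
      rw [hpow τ hτ k t ht]
      have hsgn : (-1:ℝ)^(m-k) = (-1:ℝ)^m * (-1:ℝ)^k := by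
        have e : m - k + 2*k = m + k := by omega
        calc (-1:ℝ)^(m-k) = (-1:ℝ)^(m-k) * (((-1:ℝ)^2)^k) := by norm_num
          _ = (-1:ℝ)^(m-k) * (-1:ℝ)^(2*k) := by rw [← pow_mul]
          _ = (-1:ℝ)^(m-k+2*k) := by rw [← pow_add]
          _ = (-1:ℝ)^(m+k) := by rw [e]
          _ = (-1:ℝ)^m * (-1:ℝ)^k := by rw [pow_add]
      rw [hsgn]
      simp only [hf]
      ring
    rw [Finset.sum_congr rfl hterm, ← Finset.mul_sum] at h
    have h2 : ((-1:ℝ)^m) ≠ 0 := pow_ne_zero _ (by norm_num)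
    unfold dOp
    exact (mul_eq_zero.mp h).resolve_left h2
  -- interpolation polynomials on grids of mesh 1/(N+1)
  have hdpos : ∀ N : ℕ, (0:ℝ) < ((N:ℝ)+1)⁻¹ := by intro N; positivity
  set v : ℕ → ℕ → ℝ := fun N k => (k:ℝ) * ((N:ℝ)+1)⁻¹ with hv
  have hinj : ∀ N : ℕ, Set.InjOn (v N) (range m) := by
    intro N a _ b _ hab
    simp only [hv] at hab
    have := mul_right_cancel₀ (ne_of_gt (hdpos N)) hab
    exact_mod_cast this
  set P : ℕ → Polynomial ℝ := fun N => Lagrange.interpolate (range m) (v N) (fun k => f (v N k)) with hP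
  have hPdeg : ∀ N, (P N).degree < (m : WithBot ℕ) := by
    intro N
    have := Lagrange.degree_interpolate_lt (fun k => f (v N k)) (hinj N)
    rw [Finset.card_range] at this
    exact this
  have hgrid : ∀ N n : ℕ, f ((n:ℝ) * ((N:ℝ)+1)⁻¹) = (P N).eval ((n:ℝ) * ((N:ℝ)+1)⁻¹) := by
    intro N n
    have key := grid_lemma (fun s => f s - (P N).eval s) m (((N:ℝ)+1)⁻¹) ?_ ?_ n
    · linarith [key]
    · intro n'
      rw [dOp_sub]
      rw [hfeq _ (by positivity) _ (le_of_lt (hdpos N)),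
        dOp_poly m (P N) (hPdeg N)]
      ring
    · intro k hk
      have hnode := Lagrange.eval_interpolate_at_node (fun k => f (v N k)) (hinj N) (Finset.mem_range.mpr hk)
      simp only [hv] at hnode
      simp only [hP, hv]
      rw [hnode]
      ring
  -- all interpolation polynomials coincide
  have hPeq : ∀ N, P N = P 0 := by
    intro N
    have hagree : ∀ n : ℕ, (P N).eval (n:ℝ) = (P 0).eval (n:ℝ) := by
      intro n
      have h1 : ((n * (N+1) : ℕ):ℝ) * ((N:ℝ)+1)⁻¹ = (n:ℝ) := by
        push_cast; rw [mul_assoc, mul_inv_cancel₀ (by positivity), mul_one]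
      have h2 : (n:ℝ) * (((0:ℕ):ℝ)+1)⁻¹ = (n:ℝ) := by norm_num
      have hA := hgrid N (n * (N+1)); rw [h1] at hA
      have hB := hgrid 0 n; rw [h2] at hB
      rw [← hA, ← hB]
    have hsub : P N - P 0 = 0 := by
      apply Polynomial.eq_zero_of_infinite_isRoot
      apply Set.Infinite.mono (s := Set.range (Nat.cast : ℕ → ℝ))
      · rintro _ ⟨n, rfl⟩
        simp [Polynomial.IsRoot, hagree n]
      · exact Set.infinite_range_of_injective Nat.cast_injective
    have := sub_eq_zero.mp hsub
    exact this
  refine ⟨P 0, hPdeg 0, ?_⟩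
  intro t ht
  -- approximate t from the right by grid points
  set a : ℕ → ℝ := fun j => ((⌈t * ((j:ℝ)+1)⌉₊ : ℝ)) * ((j:ℝ)+1)⁻¹ with ha
  have hge : ∀ j, t ≤ a j := by
    intro j
    have h1 := Nat.le_ceil (t * ((j:ℝ)+1))
    have h2 : t * ((j:ℝ)+1) * ((j:ℝ)+1)⁻¹ ≤ (⌈t * ((j:ℝ)+1)⌉₊ : ℝ) * ((j:ℝ)+1)⁻¹ :=
      mul_le_mul_of_nonneg_right h1 (le_of_lt (hdpos j))
    calc t = t * ((j:ℝ)+1) * ((j:ℝ)+1)⁻¹ := by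
            rw [mul_assoc, mul_inv_cancel₀ (by positivity), mul_one]
      _ ≤ a j := h2
  have hle : ∀ j, a j ≤ t + ((j:ℝ)+1)⁻¹ := by
    intro j
    have h1 : (⌈t * ((j:ℝ)+1)⌉₊ : ℝ) < t*((j:ℝ)+1) + 1 :=
      Nat.ceil_lt_add_one (by positivity)
    have h2 : (⌈t * ((j:ℝ)+1)⌉₊ : ℝ) * ((j:ℝ)+1)⁻¹ ≤ (t*((j:ℝ)+1) + 1) * ((j:ℝ)+1)⁻¹ :=
      mul_le_mul_of_nonneg_right (le_of_lt h1) (le_of_lt (hdpos j))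
    have h3 : (t*((j:ℝ)+1) + 1) * ((j:ℝ)+1)⁻¹ = t + ((j:ℝ)+1)⁻¹ := by
      field_simp
    calc a j ≤ (t*((j:ℝ)+1) + 1) * ((j:ℝ)+1)⁻¹ := h2
      _ = t + ((j:ℝ)+1)⁻¹ := h3
  have hafeq : ∀ j, f (a j) = (P 0).eval (a j) := by
    intro j
    have := hgrid j (⌈t * ((j:ℝ)+1)⌉₊)
    rw [hPeq j] at this
    exact this
  have hinvlim : Filter.Tendsto (fun j : ℕ => ((j:ℝ)+1)⁻¹) Filter.atTop (nhds 0) := by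
    have := tendsto_one_div_add_atTop_nhds_zero_nat (𝕜 := ℝ)
    simpa [one_div] using this
  have hatend : Filter.Tendsto a Filter.atTop (nhds t) := by
    apply tendsto_of_tendsto_of_tendsto_of_le_of_le (g := fun _ : ℕ => t)
      (h := fun j : ℕ => t + ((j:ℝ)+1)⁻¹)
    · exact tendsto_const_nhds
    · have := Filter.Tendsto.const_add t hinvlim
      simpa using this
    · exact hge
    · exact hle
  -- right continuity of f at t
  have hcont : Filter.Tendsto (fun j => f (a j)) Filter.atTop (nhds (f t)) := by
    set y := T t x with hy
    have h1 : Filter.Tendsto (fun h : ℝ => T h y) (nhdsWithin 0 (Set.Ici 0)) (nhds y) := by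
      have hins : Set.Ici (0:ℝ) = insert 0 (Set.Ioi 0) := by
        rw [Set.Ioi_insert]
      rw [hins, nhdsWithin_insert, Filter.tendsto_sup]
      constructor
      · have hp : Filter.Tendsto (fun h : ℝ => T h y) (pure 0) (nhds (T 0 y)) :=
          tendsto_pure_nhds _ 0
        simpa [hT0] using hp
      · exact hTcont y
    have h2 : Filter.Tendsto (fun j => a j - t) Filter.atTop (nhdsWithin 0 (Set.Ici 0)) := by
      rw [tendsto_nhdsWithin_iff]
      constructor
      · have := hatend.sub_const t
        simpa using this
      · filter_upwards with j
        simp only [Set.mem_Ici, sub_nonneg]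
        exact hge j
    have h3 := h1.comp h2
    have h4 : ∀ j, T (a j) x = T (a j - t) y := by
      intro j
      have hs := hTsem t (a j - t) ht (by linarith [hge j])
      rw [show t + (a j - t) = a j by ring] at hs
      rw [hs]; rfl
    have h5 : Filter.Tendsto (fun j => ‖T (a j - t) y‖^2) Filter.atTop (nhds (‖y‖^2)) :=
      (h3.norm).pow 2
    have h6 : (fun j => f (a j)) = fun j => ‖T (a j - t) y‖^2 := by
      funext j
      simp only [hf, h4 j]
    rw [h6]
    exact h5
  have hconp : Filter.Tendsto (fun j => (P 0).eval (a j)) Filter.atTop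
      (nhds ((P 0).eval t)) :=
    ((Polynomial.continuous (P 0)).tendsto t).comp hatend
  have heq2 : Filter.Tendsto (fun j => f (a j)) Filter.atTop (nhds ((P 0).eval t)) := by
    have : (fun j => f (a j)) = fun j => (P 0).eval (a j) := funext hafeq
    rw [this]
    exact hconp
  exact tendsto_nhds_unique hcont heq2
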